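/- arXiv:2412.05461 — 2 statements merged into one kernel-verified Lean document; each statement's English description precedes it below -/
import Mathlib

section
/- (Inverse in the triple Riordan group.) Let g, f1, f2, f3, h, h̄ be formal power series over ℚ with g supported on multiples of 3, each fᵢ supported on residue 1 mod 3, h and h̄ having zero constant coefficient, h^3 = f1*f2*f3, subst h̄ h = X, and subst h h̄ = X. Suppose G, F1, F2, F3 are power series satisfying (subst h̄ g) * G = 1 and (subst h̄ fᵢ) * Fᵢ = X * h̄ for i = 1,2,3. Then g * subst h G = 1 and fᵢ * subst h Fᵢ = X * h for i = 1,2,3; that is, the tuple (G, F1, F2, F3) = (1/g(h̄), X h̄/f1(h̄), X h̄/f2(h̄), X h̄/f3(h̄)) is a two-sided inverse of (g, f1, f2, f3), with product the identity element (1, X, X, X). -/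
open PowerSeries Finset

/-- Substitution of the power series `h` (with zero constant coefficient) into `F`. -/
noncomputable def subst (h F : PowerSeries ℚ) : PowerSeries ℚ :=
  PowerSeries.mk fun n => ∑ k ∈ range (n + 1), coeff k F * coeff n (h ^ k)

lemma coeff_subst' (h F : PowerSeries ℚ) (n : ℕ) :
    coeff n (_root_.subst h F) = ∑ k ∈ range (n + 1), coeff k F * coeff n (h ^ k) := by
  simp [_root_.subst]

lemma subst_congr {A B : PowerSeries ℚ} (h : PowerSeries ℚ) {n : ℕ}
    (hAB : ∀ k ≤ n, coeff k A = coeff k B) :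
    coeff n (_root_.subst h A) = coeff n (_root_.subst h B) := by
  rw [coeff_subst', coeff_subst']
  refine Finset.sum_congr rfl fun k hk => ?_
  rw [hAB k (Nat.lt_succ_iff.mp (mem_range.mp hk))]

lemma coeff_pow_eq_zero {h : PowerSeries ℚ} (hh0 : coeff 0 h = 0)
    {n k : ℕ} (hk : n < k) : coeff n (h ^ k) = 0 := by
  have hd : (X : PowerSeries ℚ) ∣ h := by
    rw [PowerSeries.X_dvd_iff]
    simpa [← PowerSeries.coeff_zero_eq_constantCoeff] using hh0
  have hdk : (X : PowerSeries ℚ) ^ k ∣ h ^ k := pow_dvd_pow_of_dvd hd k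
  exact (PowerSeries.X_pow_dvd_iff.mp hdk) n hk

lemma subst_coe {h : PowerSeries ℚ} (hh0 : coeff 0 h = 0) (P : Polynomial ℚ) :
    _root_.subst h (P : PowerSeries ℚ) = Polynomial.aeval h P := by
  ext n
  rw [coeff_subst', Polynomial.aeval_def, Polynomial.eval₂_eq_sum_range, map_sum]
  set M := max (n + 1) (P.natDegree + 1) with hM
  have e1 : ∑ k ∈ range (n + 1), coeff k (P : PowerSeries ℚ) * coeff n (h ^ k)
      = ∑ k ∈ range M, coeff k (P : PowerSeries ℚ) * coeff n (h ^ k) := by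
    apply Finset.sum_subset (range_subset_range.mpr (le_max_left _ _))
    intro k _ hk
    have hnk : n < k := by
      have := mem_range.not.mp hk
      omega
    rw [coeff_pow_eq_zero hh0 hnk, mul_zero]
  have e2 : ∑ i ∈ range (P.natDegree + 1),
        coeff n (algebraMap ℚ (PowerSeries ℚ) (P.coeff i) * h ^ i)
      = ∑ k ∈ range M, coeff k (P : PowerSeries ℚ) * coeff n (h ^ k) := by
    rw [Finset.sum_subset (range_subset_range.mpr (le_max_right _ _))]
    · refine Finset.sum_congr rfl fun k _ => ?_
      have : algebraMap ℚ (PowerSeries ℚ) (P.coeff k) = PowerSeries.C (P.coeff k) := rfl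
      rw [this, Polynomial.coeff_coe]
      simp
    · intro k _ hk
      have hdk : P.natDegree < k := by
        have := mem_range.not.mp hk
        omega
      rw [Polynomial.coeff_eq_zero_of_natDegree_lt hdk]
      simp
  rw [e1, ← e2]

lemma subst_add (h A B : PowerSeries ℚ) :
    _root_.subst h (A + B) = _root_.subst h A + _root_.subst h B := by
  ext n
  simp [coeff_subst', add_mul, Finset.sum_add_distrib]

lemma subst_C (h : PowerSeries ℚ) (a : ℚ) :
    _root_.subst h (PowerSeries.C a) = PowerSeries.C a := by
  ext n
  rw [coeff_subst', Finset.sum_eq_single 0]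
  · simp [PowerSeries.coeff_C, PowerSeries.coeff_one]
  · intro k _ hk
    simp [PowerSeries.coeff_C, hk]
  · intro hn
    exact absurd (mem_range.mpr (Nat.succ_pos n)) hn

lemma subst_one (h : PowerSeries ℚ) : _root_.subst h 1 = 1 := by
  simpa using _root_.subst_C h 1

lemma subst_mul {h : PowerSeries ℚ} (hh0 : coeff 0 h = 0) (A B : PowerSeries ℚ) :
    _root_.subst h (A * B) = _root_.subst h A * _root_.subst h B := by
  ext n
  set P := trunc (n + 1) A with hP
  set Q := trunc (n + 1) B with hQ
  have hA : ∀ k ≤ n, coeff k A = coeff k (P : PowerSeries ℚ) := by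
    intro k hk
    rw [Polynomial.coeff_coe, hP, coeff_trunc, if_pos (Nat.lt_succ_iff.mpr hk)]
  have hB : ∀ k ≤ n, coeff k B = coeff k (Q : PowerSeries ℚ) := by
    intro k hk
    rw [Polynomial.coeff_coe, hQ, coeff_trunc, if_pos (Nat.lt_succ_iff.mpr hk)]
  have step1 : coeff n (_root_.subst h (A * B))
      = coeff n (_root_.subst h ((P : PowerSeries ℚ) * (Q : PowerSeries ℚ))) := by
    apply _root_.subst_congr
    intro k hk
    rw [PowerSeries.coeff_mul, PowerSeries.coeff_mul]
    refine Finset.sum_congr rfl fun p hp => ?_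
    have hps := Finset.HasAntidiagonal.mem_antidiagonal.mp hp
    rw [hA p.1 (le_trans (by omega) hk), hB p.2 (le_trans (by omega) hk)]
  have step2 : _root_.subst h ((P : PowerSeries ℚ) * (Q : PowerSeries ℚ))
      = _root_.subst h (P : PowerSeries ℚ) * _root_.subst h (Q : PowerSeries ℚ) := by
    rw [← Polynomial.coe_mul, _root_.subst_coe hh0, _root_.subst_coe hh0, _root_.subst_coe hh0, map_mul]
  have step3 : coeff n (_root_.subst h (P : PowerSeries ℚ) * _root_.subst h (Q : PowerSeries ℚ))
      = coeff n (_root_.subst h A * _root_.subst h B) := by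
    rw [PowerSeries.coeff_mul, PowerSeries.coeff_mul]
    refine Finset.sum_congr rfl fun p hp => ?_
    have hps := Finset.HasAntidiagonal.mem_antidiagonal.mp hp
    rw [_root_.subst_congr h (n := p.1) fun k hk => (hA k (le_trans hk (by omega))).symm,
        _root_.subst_congr h (n := p.2) fun k hk => (hB k (le_trans hk (by omega))).symm]
  rw [step1, step2, step3]

lemma subst_aeval {h : PowerSeries ℚ} (hh0 : coeff 0 h = 0) (w : PowerSeries ℚ)
    (P : Polynomial ℚ) :
    _root_.subst h (Polynomial.aeval w P) = Polynomial.aeval (_root_.subst h w) P := by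
  induction P using Polynomial.induction_on with
  | C a =>
      have : (Polynomial.aeval w) (Polynomial.C a) = PowerSeries.C a := by
        simp [Polynomial.aeval_C]
      have h2 : (Polynomial.aeval (_root_.subst h w)) (Polynomial.C a) = PowerSeries.C a := by
        simp [Polynomial.aeval_C]
      rw [this, h2, _root_.subst_C]
  | add p q hp hq =>
      rw [map_add, map_add, _root_.subst_add, hp, hq]
  | monomial m a ih =>
      have e : Polynomial.C a * Polynomial.X ^ (m + 1)
          = Polynomial.C a * Polynomial.X ^ m * Polynomial.X := by ring
      have l : (Polynomial.aeval w) (Polynomial.C a * Polynomial.X ^ m * Polynomial.X)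
          = (Polynomial.aeval w) (Polynomial.C a * Polynomial.X ^ m) * w := by
        rw [map_mul, Polynomial.aeval_X]
      have r : (Polynomial.aeval (_root_.subst h w)) (Polynomial.C a * Polynomial.X ^ m * Polynomial.X)
          = (Polynomial.aeval (_root_.subst h w)) (Polynomial.C a * Polynomial.X ^ m) * _root_.subst h w := by
        rw [map_mul, Polynomial.aeval_X]
      rw [e, l, r, _root_.subst_mul hh0, ih]

lemma coeff_zero_subst (h : PowerSeries ℚ) {w : PowerSeries ℚ} (hw0 : coeff 0 w = 0) :
    coeff 0 (_root_.subst h w) = 0 := by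
  simp [coeff_subst', hw0]

lemma subst_comp {h w : PowerSeries ℚ} (hh0 : coeff 0 h = 0)
    (hw0 : coeff 0 w = 0) (F : PowerSeries ℚ) :
    _root_.subst h (_root_.subst w F) = _root_.subst (_root_.subst h w) F := by
  ext n
  set P := trunc (n + 1) F with hP
  have hF : ∀ k ≤ n, coeff k F = coeff k (P : PowerSeries ℚ) := by
    intro k hk
    rw [Polynomial.coeff_coe, hP, coeff_trunc, if_pos (Nat.lt_succ_iff.mpr hk)]
  have s1 : coeff n (_root_.subst h (_root_.subst w F))
      = coeff n (_root_.subst h (_root_.subst w (P : PowerSeries ℚ))) := by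
    apply _root_.subst_congr
    intro k hk
    exact _root_.subst_congr w fun j hj => hF j (le_trans hj hk)
  have s2 : _root_.subst h (_root_.subst w (P : PowerSeries ℚ))
      = _root_.subst (_root_.subst h w) (P : PowerSeries ℚ) := by
    rw [_root_.subst_coe hw0, _root_.subst_aeval hh0, _root_.subst_coe (coeff_zero_subst h hw0)]
  have s3 : coeff n (_root_.subst (_root_.subst h w) (P : PowerSeries ℚ))
      = coeff n (_root_.subst (_root_.subst h w) F) := by
    exact _root_.subst_congr _ fun k hk => (hF k hk).symm
  rw [s1, s2, s3]

lemma subst_X_right {h : PowerSeries ℚ} (hh0 : coeff 0 h = 0) :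
    _root_.subst h X = h := by
  ext n
  rw [coeff_subst']
  rcases Nat.eq_zero_or_pos n with hn | hn
  · subst hn
    simpa using hh0.symm
  · rw [Finset.sum_eq_single 1]
    · simp
    · intro k _ hk
      simp [PowerSeries.coeff_X, hk]
    · intro hn1
      exact absurd (mem_range.mpr (by omega)) hn1

lemma subst_X_left (F : PowerSeries ℚ) : _root_.subst X F = F := by
  ext n
  rw [coeff_subst', Finset.sum_eq_single n]
  · simp
  · intro k _ hk
    rw [PowerSeries.coeff_X_pow, if_neg (fun hnk => hk hnk.symm), mul_zero]
  · intro hn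
    exact absurd (mem_range.mpr (Nat.lt_succ_self n)) hn

theorem tripleRiordan_inverse
    (g f1 f2 f3 h hbar : PowerSeries ℚ)
    (hg : ∀ n : ℕ, n % 3 ≠ 0 → coeff n g = 0)
    (hf1 : ∀ n : ℕ, n % 3 ≠ 1 → coeff n f1 = 0)
    (hf2 : ∀ n : ℕ, n % 3 ≠ 1 → coeff n f2 = 0)
    (hf3 : ∀ n : ℕ, n % 3 ≠ 1 → coeff n f3 = 0)
    (hh0 : coeff 0 h = 0) (hhbar0 : coeff 0 hbar = 0)
    (hh3 : h ^ 3 = f1 * f2 * f3)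
    (hinv1 : _root_.subst hbar h = X) (hinv2 : _root_.subst h hbar = X)
    (G F1 F2 F3 : PowerSeries ℚ)
    (hG : (_root_.subst hbar g) * G = 1)
    (hF1 : (_root_.subst hbar f1) * F1 = X * hbar)
    (hF2 : (_root_.subst hbar f2) * F2 = X * hbar)
    (hF3 : (_root_.subst hbar f3) * F3 = X * hbar) :
    g * _root_.subst h G = 1 ∧ f1 * _root_.subst h F1 = X * h ∧
      f2 * _root_.subst h F2 = X * h ∧ f3 * _root_.subst h F3 = X * h := by
  have hcomp : ∀ F : PowerSeries ℚ, _root_.subst h (_root_.subst hbar F) = F := by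
    intro F
    rw [_root_.subst_comp hh0 hhbar0, hinv2, subst_X_left]
  have key : ∀ f F : PowerSeries ℚ, (_root_.subst hbar f) * F = X * hbar →
      f * _root_.subst h F = X * h := by
    intro f F hf
    have := congrArg (_root_.subst h) hf
    rw [_root_.subst_mul hh0, hcomp, _root_.subst_mul hh0, subst_X_right hh0, hinv2] at this
    rw [this, mul_comm]
  refine ⟨?_, key f1 F1 hF1, key f2 F2 hF2, key f3 F3 hF3⟩
  have := congrArg (_root_.subst h) hG
  rw [_root_.subst_mul hh0, hcomp, _root_.subst_one] at this
  exact this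
end

section
/- Let g, f1, f2, f3 be formal power series over ℚ with g supported on multiples of 3 and each fᵢ supported on residue 1 mod 3 with zero constant coefficient. Then the diagonal sums of the triple Riordan matrix have generating function g*(1 + X*f1 + X^2*f1*f2)*(1 - X^3*f1*f2*f3)⁻¹: for every natural number n, ∑_{(m,k), m+k=n} a(m,k) = coeff n (g * (1 + X*f1 + X^2*f1*f2) * (1 - X^3*f1*f2*f3)⁻¹), where a(m,k) = coeff m (g * f1^⌊(k+2)/3⌋ * f2^⌊(k+1)/3⌋ * f3^⌊k/3⌋) and the sum is over the antidiagonal m + k = n. -/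
open PowerSeries Finset

/-- The entry `a(n,k)` of the triple Riordan matrix associated to `(g, f1, f2, f3)`. -/
noncomputable def tripleEntry (g f1 f2 f3 : PowerSeries ℚ) (n k : ℕ) : ℚ :=
  coeff n (g * f1 ^ ((k + 2) / 3) * f2 ^ ((k + 1) / 3) * f3 ^ (k / 3))

lemma sum_range_three_mul (t : ℕ → ℚ) (N : ℕ) :
    ∑ k ∈ Finset.range (3 * N) , t k =
      ∑ q ∈ Finset.range N, (t (3 * q) + t (3 * q + 1) + t (3 * q + 2)) := by
  induction N with
  | zero => simp
  | succ N ih =>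
      have h3 : 3 * (N + 1) = (3 * N + 1 + 1) + 1 := by ring
      rw [h3, Finset.sum_range_succ, Finset.sum_range_succ, Finset.sum_range_succ,
        Finset.sum_range_succ, ih]
      ring

theorem tripleRiordan_diagonal_sums
    (g f1 f2 f3 : PowerSeries ℚ)
    (hg : ∀ n : ℕ, n % 3 ≠ 0 → coeff n g = 0)
    (hf1 : ∀ n : ℕ, n % 3 ≠ 1 → coeff n f1 = 0) (hf1' : coeff 0 f1 = 0)
    (hf2 : ∀ n : ℕ, n % 3 ≠ 1 → coeff n f2 = 0) (hf2' : coeff 0 f2 = 0)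
    (hf3 : ∀ n : ℕ, n % 3 ≠ 1 → coeff n f3 = 0) (hf3' : coeff 0 f3 = 0) :
    ∀ n : ℕ,
      ∑ p ∈ Finset.HasAntidiagonal.antidiagonal n, tripleEntry g f1 f2 f3 p.1 p.2 =
        coeff n (g * (1 + X * f1 + X ^ 2 * f1 * f2) *
          (1 - X ^ 3 * f1 * f2 * f3)⁻¹) := by
  intro n
  set u : PowerSeries ℚ := X ^ 3 * f1 * f2 * f3 with hu
  set A : PowerSeries ℚ := g * (1 + X * f1 + X ^ 2 * f1 * f2) with hA
  set p : ℕ → PowerSeries ℚ :=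
    fun k => g * f1 ^ ((k + 2) / 3) * f2 ^ ((k + 1) / 3) * f3 ^ (k / 3) with hp
  set t : ℕ → ℚ := fun k => coeff n (X ^ k * p k) with ht
  have hXu : (X : PowerSeries ℚ) ∣ u := ⟨X ^ 2 * f1 * f2 * f3, by rw [hu]; ring⟩
  have hconst : constantCoeff (1 - u) ≠ 0 := by
    obtain ⟨c, hc⟩ := hXu
    rw [hc]
    simp
  have hne : (1 - u) ≠ 0 := fun h => hconst (by rw [h]; simp)
  -- geometric series truncation
  have geom : (1 - u) * (∑ q ∈ Finset.range (n + 1), u ^ q) = 1 - u ^ (n + 1) := by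
    have h := geom_sum_mul u (n + 1)
    linear_combination -h
  have h1 : (1 - u) * (1 - u)⁻¹ = 1 := PowerSeries.mul_inv_cancel _ hconst
  have hinv : (1 - u)⁻¹ =
      (∑ q ∈ Finset.range (n + 1), u ^ q) + u ^ (n + 1) * (1 - u)⁻¹ := by
    apply mul_left_cancel₀ hne
    rw [h1, mul_add, geom, ← mul_assoc, mul_comm (1 - u) (u ^ (n + 1)), mul_assoc, h1]
    ring
  -- RHS expansion
  have hzero : coeff n (A * (u ^ (n + 1) * (1 - u)⁻¹)) = 0 := by
    have hd : (X : PowerSeries ℚ) ^ (n + 1) ∣ A * (u ^ (n + 1) * (1 - u)⁻¹) := by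
      have h2 : (X : PowerSeries ℚ) ^ (n + 1) ∣ u ^ (n + 1) := pow_dvd_pow_of_dvd hXu _
      exact h2.trans ⟨A * (1 - u)⁻¹, by ring⟩
    exact PowerSeries.X_pow_dvd_iff.mp hd n (Nat.lt_succ_self n)
  have hRHS : coeff n (A * (1 - u)⁻¹) =
      ∑ q ∈ Finset.range (n + 1), coeff n (A * u ^ q) := by
    rw [hinv, mul_add, map_add, hzero, Finset.mul_sum, map_sum]
    simp
  -- each A * u^q decomposes into three t-terms
  have hterm : ∀ q : ℕ, coeff n (A * u ^ q) =
      t (3 * q) + t (3 * q + 1) + t (3 * q + 2) := by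
    intro q
    have e : A * u ^ q = X ^ (3 * q) * p (3 * q) + X ^ (3 * q + 1) * p (3 * q + 1)
        + X ^ (3 * q + 2) * p (3 * q + 2) := by
      have d1 : (3 * q + 2) / 3 = q := by omega
      have d2 : (3 * q + 1) / 3 = q := by omega
      have d3 : (3 * q) / 3 = q := by omega
      have d4 : (3 * q + 1 + 2) / 3 = q + 1 := by omega
      have d5 : (3 * q + 1 + 1) / 3 = q := by omega
      have d6 : (3 * q + 2 + 2) / 3 = q + 1 := by omega
      have d7 : (3 * q + 2 + 1) / 3 = q + 1 := by omega
      simp only [hp, hA, hu, d1, d2, d3, d4, d5, d6, d7]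
      ring
    rw [e]
    simp [ht]
  -- LHS reindexing
  have hL1 : ∑ pr ∈ Finset.HasAntidiagonal.antidiagonal n, tripleEntry g f1 f2 f3 pr.1 pr.2 =
      ∑ k ∈ Finset.range (n + 1), tripleEntry g f1 f2 f3 k (n - k) :=
    Finset.Nat.sum_antidiagonal_eq_sum_range_succ_mk _ n
  have hL2 : ∑ k ∈ Finset.range (n + 1), tripleEntry g f1 f2 f3 k (n - k) =
      ∑ k ∈ Finset.range (n + 1), t (n - k) := by
    apply Finset.sum_congr rfl
    intro k hk
    rw [Finset.mem_range, Nat.lt_succ_iff] at hk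
    show coeff k (p (n - k)) = coeff n (X ^ (n - k) * p (n - k))
    have h := PowerSeries.coeff_X_pow_mul (p (n - k)) (n - k) k
    rw [show k + (n - k) = n from by omega] at h
    exact h.symm
  have hrefl : ∑ k ∈ Finset.range (n + 1), t (n - k) = ∑ k ∈ Finset.range (n + 1), t k := by
    have h := Finset.sum_range_reflect t (n + 1)
    simpa using h
  have hL3 : ∑ k ∈ Finset.range (n + 1), t k = ∑ k ∈ Finset.range (3 * (n + 1)), t k := by
    apply Finset.sum_subset
    · apply Finset.range_subset_range.mpr; omega
    · intro k _ hk
      rw [Finset.mem_range, not_lt] at hk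
      have hd : (X : PowerSeries ℚ) ^ k ∣ X ^ k * p k := Dvd.intro _ rfl
      exact PowerSeries.X_pow_dvd_iff.mp hd n (by omega)
  rw [hL1, hL2, hrefl, hL3, sum_range_three_mul, hRHS]
  exact Finset.sum_congr rfl fun q _ => (hterm q).symm
end
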